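/- Let A be a real n×m matrix, D a real m×m diagonal matrix with strictly positive diagonal entries, P ∈ ℝⁿ, and f̂ ∈ ℝᵐ with A·f̂ = P. Let C be a real m×q matrix with AC = 0 and such that the kernel of x ↦ Cᵀx (from ℝᵐ to ℝ^q) is contained in the image of θ ↦ Aᵀθ. Set z₀ = D⁻¹f̂, H = D⁻¹C, z(λ) = z₀ + Hλ, and g(λ) = Cᵀ·arcsin(z(λ)) for λ ∈ ℝ^q. Let λ̲, λ̄ ∈ ℝ^q with λ̲ ≤ λ̄ componentwise, and let Λ = {λ ∈ ℝ^q : λ̲ ≤ λ ≤ λ̄ componentwise}. Assume: (1) |z_e(λ)| ≤ 1 for every e ∈ {1,…,m} and every λ ∈ Λ; (2) for all λ, μ ∈ Λ with λ ≤ μ componentwise, g(λ) ≤ g(μ) componentwise; (3) for every i ∈ {1,…,q}, g_i evaluated at the point whose i-th coordinate is λ̲_i and whose j-th coordinate is λ̄_j for all j ≠ i is ≤ 0, and g_i evaluated at the point whose i-th coordinate is λ̄_i and whose j-th coordinate is λ̲_j for all j ≠ i is ≥ 0. Then there exists θ ∈ ℝⁿ such that P = A·D·sin(Aᵀθ) and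 |(Aᵀθ)_e| ≤ π/2 for every e ∈ {1,…,m}. -/

import Mathlib

open Matrix Real

/-- Antiderivative of `arcsin`. -/
noncomputable def arcsinPrim : ℝ → ℝ := fun t => ∫ s in (0:ℝ)..t, Real.arcsin s

lemma hasDerivAt_arcsinPrim (x : ℝ) : HasDerivAt arcsinPrim (Real.arcsin x) x :=
  (Real.continuous_arcsin.integral_hasStrictDerivAt 0 x).hasDerivAt

/-- At an interior-from-the-right minimum on `[a,b]`, the derivative is nonnegative. -/
lemma deriv_nonneg_of_isMinOn {φ : ℝ → ℝ} {a b c L : ℝ}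
    (hmin : ∀ t ∈ Set.Icc a b, φ c ≤ φ t) (hac : a ≤ c) (hcb : c < b)
    (hL : HasDerivAt φ L c) : 0 ≤ L := by
  by_contra h
  push_neg at h
  have hs : Filter.Tendsto (slope φ c) (nhdsWithin c (Set.Ioi c)) (nhds L) :=
    (hasDerivAt_iff_tendsto_slope.mp hL).mono_left
      (nhdsWithin_mono c (fun x hx => ne_of_gt hx))
  have ev1 : ∀ᶠ t in nhdsWithin c (Set.Ioi c), slope φ c t < 0 :=
    hs.eventually_lt_const h
  have ev2 : ∀ᶠ t in nhdsWithin c (Set.Ioi c), t ∈ Set.Ioo c b :=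
    Filter.eventually_of_mem (Ioo_mem_nhdsGT_of_mem ⟨le_refl c, hcb⟩) (fun _ ht => ht)
  obtain ⟨t, h1t, h2t⟩ := (ev1.and ev2).exists
  have hnum : 0 ≤ φ t - φ c := by
    have := hmin t ⟨le_of_lt (lt_of_le_of_lt hac h2t.1), le_of_lt h2t.2⟩
    linarith
  have : 0 ≤ slope φ c t := by
    rw [slope_def_field]
    exact div_nonneg hnum (by linarith [h2t.1])
  linarith

/-- At an interior-from-the-left minimum on `[a,b]`, the derivative is nonpositive. -/
lemma deriv_nonpos_of_isMinOn {φ : ℝ → ℝ} {a b c L : ℝ}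
    (hmin : ∀ t ∈ Set.Icc a b, φ c ≤ φ t) (hac : a < c) (hcb : c ≤ b)
    (hL : HasDerivAt φ L c) : L ≤ 0 := by
  by_contra h
  push_neg at h
  have hs : Filter.Tendsto (slope φ c) (nhdsWithin c (Set.Iio c)) (nhds L) :=
    (hasDerivAt_iff_tendsto_slope.mp hL).mono_left
      (nhdsWithin_mono c (fun x hx => ne_of_lt hx))
  have ev1 : ∀ᶠ t in nhdsWithin c (Set.Iio c), 0 < slope φ c t :=
    hs.eventually_const_lt h
  have ev2 : ∀ᶠ t in nhdsWithin c (Set.Iio c), t ∈ Set.Ioo a c :=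
    Filter.eventually_of_mem (Ioo_mem_nhdsLT_of_mem ⟨hac, le_refl c⟩) (fun _ ht => ht)
  obtain ⟨t, h1t, h2t⟩ := (ev1.and ev2).exists
  have hnum : 0 ≤ φ t - φ c := by
    have := hmin t ⟨le_of_lt h2t.1, le_of_lt (lt_of_lt_of_le h2t.2 hcb)⟩
    linarith
  have : slope φ c t ≤ 0 := by
    rw [slope_def_field]
    apply div_nonpos_of_nonneg_of_nonpos hnum
    linarith [h2t.2]
  linarith

/-- Theorem 1 (Sufficient Condition for Solvability): under edge-wise
feasibility of the cycle-parameterized normalized line flows over the box `Λ`,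
coordinatewise monotonicity of the cycle consistency residual `g`, and sign
conditions at opposite corner points of the box, the lossless real power flow
equation `P = A·D·sin(Aᵀθ)` admits a solution with all edge angle differences
bounded by `π/2`. -/
theorem stmt5 {n m q : ℕ}
    (A : Matrix (Fin n) (Fin m) ℝ)
    (d : Fin m → ℝ) (hd : ∀ e, 0 < d e)
    (D : Matrix (Fin m) (Fin m) ℝ) (hD : D = Matrix.diagonal d)
    (P : Fin n → ℝ) (fhat : Fin m → ℝ) (hfhat : A.mulVec fhat = P)
    (C : Matrix (Fin m) (Fin q) ℝ) (hAC : A * C = 0)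
    (hker : LinearMap.ker (Cᵀ.mulVecLin) ≤ LinearMap.range (Aᵀ.mulVecLin))
    (z0 : Fin m → ℝ) (hz0 : z0 = (D⁻¹).mulVec fhat)
    (H : Matrix (Fin m) (Fin q) ℝ) (hH : H = D⁻¹ * C)
    (z : (Fin q → ℝ) → Fin m → ℝ) (hz : ∀ lam, z lam = z0 + H.mulVec lam)
    (g : (Fin q → ℝ) → Fin q → ℝ)
    (hg : ∀ lam, g lam = Cᵀ.mulVec (fun e => Real.arcsin (z lam e)))
    (lamL lamU : Fin q → ℝ) (hle : lamL ≤ lamU)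
    (Lam : Set (Fin q → ℝ)) (hLam : Lam = {lam | lamL ≤ lam ∧ lam ≤ lamU})
    (h1 : ∀ lam ∈ Lam, ∀ e, |z lam e| ≤ 1)
    (h2 : ∀ lam ∈ Lam, ∀ mu ∈ Lam, lam ≤ mu → g lam ≤ g mu)
    (h3 : ∀ i : Fin q,
      g (fun j => if j = i then lamL i else lamU j) i ≤ 0 ∧
      0 ≤ g (fun j => if j = i then lamU i else lamL j) i) :
    ∃ θ : Fin n → ℝ,
      P = A.mulVec (D.mulVec (fun e => Real.sin (Aᵀ.mulVec θ e))) ∧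
      ∀ e, |Aᵀ.mulVec θ e| ≤ π / 2 := by
  -- basic facts about D
  have hdet : IsUnit D.det := by
    rw [hD, Matrix.det_diagonal]
    exact isUnit_iff_ne_zero.mpr (Finset.prod_ne_zero_iff.mpr fun e _ => (hd e).ne')
  have hDDinv : D * D⁻¹ = 1 := Matrix.mul_nonsing_inv D hdet
  have hDH : D * H = C := by
    rw [hH, ← Matrix.mul_assoc, hDDinv, Matrix.one_mul]
  have hdH : ∀ e i, d e * H e i = C e i := by
    intro e i
    have := congrArg (fun M => M e i) hDH
    simpa [hD, Matrix.mul_apply, Matrix.diagonal_apply, ite_mul, Finset.sum_ite_eq] using this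
  -- the set Λ is a compact nonempty Icc
  have hLam' : Lam = Set.Icc lamL lamU := by rw [hLam]; rfl
  -- the energy function
  set F := arcsinPrim with hF
  set E : (Fin q → ℝ) → ℝ := fun lam => ∑ e, d e * F (z lam e) with hE
  have hzc : ∀ e, Continuous fun lam : Fin q → ℝ => z lam e := by
    intro e
    simp only [hz]
    apply Continuous.add continuous_const
    have : (fun lam : Fin q → ℝ => H.mulVec lam e) =
        fun lam => ∑ j, H e j * lam j := by
      funext lam; simp [Matrix.mulVec, dotProduct]
    rw [this]
    exact continuous_finset_sum _ fun j _ => continuous_const.mul (continuous_apply j)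
  have hFc : Continuous F := by
    rw [continuous_iff_continuousAt]
    exact fun x => (hasDerivAt_arcsinPrim x).continuousAt
  have hEc : Continuous E :=
    continuous_finset_sum _ fun e _ => continuous_const.mul (hFc.comp (hzc e))
  obtain ⟨l, hlmem, hlmin⟩ :=
    (isCompact_Icc (a := lamL) (b := lamU)).exists_isMinOn ⟨lamL, le_refl _, hle⟩
      hEc.continuousOn
  have hlLam : l ∈ Lam := hLam' ▸ hlmem
  have hlmin' : ∀ x ∈ Set.Icc lamL lamU, E l ≤ E x := fun x hx => hlmin hx
  -- affine formula for z along coordinate i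
  have hzaff : ∀ (i : Fin q) (t : ℝ) (e : Fin m),
      z (Function.update l i t) e = z l e + H e i * (t - l i) := by
    intro i t e
    have hupd : ∀ j, Function.update l i t j = l j + (if j = i then t - l i else 0) := by
      intro j
      by_cases h : j = i
      · subst h; simp
      · simp [Function.update_of_ne h, h]
    simp only [hz, Pi.add_apply, Matrix.mulVec, dotProduct]
    have : ∑ j, H e j * Function.update l i t j
        = ∑ j, (H e j * l j + (if j = i then H e j * (t - l i) else 0)) := by
      apply Finset.sum_congr rfl
      intro j _
      rw [hupd j]
      by_cases h : j = i <;> simp [h] <;> ring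
    rw [this, Finset.sum_add_distrib, Finset.sum_ite_eq' Finset.univ i
      (fun j => H e j * (t - l i))]
    simp
    ring
  -- derivative of the coordinate-i section of E at l i is g l i
  have hgder : ∀ i : Fin q,
      HasDerivAt (fun t => E (Function.update l i t)) (g l i) (l i) := by
    intro i
    have h1d : ∀ e : Fin m, HasDerivAt
        (fun t => d e * F (z l e + H e i * (t - l i)))
        (d e * (Real.arcsin (z l e + H e i * (l i - l i)) * H e i)) (l i) := by
      intro e
      have hin : HasDerivAt (fun t : ℝ => z l e + H e i * (t - l i)) (H e i) (l i) := by
        simpa using (((hasDerivAt_id (l i)).sub_const (l i)).const_mul (H e i)).const_add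
          (z l e)
      exact ((hasDerivAt_arcsinPrim (z l e + H e i * (l i - l i))).comp (l i) hin).const_mul
        (d e)
    have hsum := HasDerivAt.fun_sum (fun e (_ : e ∈ Finset.univ) => h1d e)
    have heq : (fun t => ∑ e, d e * F (z l e + H e i * (t - l i)))
        = fun t => E (Function.update l i t) := by
      funext t
      simp only [hE]
      exact Finset.sum_congr rfl fun e _ => by rw [hzaff i t e]
    rw [heq] at hsum
    refine hsum.congr_deriv (Eq.symm ?_)
    rw [hg]
    simp only [Matrix.mulVec, dotProduct, Matrix.transpose_apply]
    apply Finset.sum_congr rfl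
    intro e _
    rw [← hdH e i]
    ring_nf
  -- sign analysis at the minimizer: g l = 0
  have hgzero : ∀ i, g l i = 0 := by
    intro i
    have hmini : ∀ t ∈ Set.Icc (lamL i) (lamU i),
        E (Function.update l i (l i)) ≤ E (Function.update l i t) := by
      intro t ht
      rw [Function.update_eq_self]
      apply hlmin'
      constructor
      · intro j
        by_cases h : j = i
        · subst h; simpa using ht.1
        · simpa [Function.update_of_ne h] using hlmem.1 j
      · intro j
        by_cases h : j = i
        · subst h; simpa using ht.2
        · simpa [Function.update_of_ne h] using hlmem.2 j
    have hmini' : ∀ t ∈ Set.Icc (lamL i) (lamU i),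
        (fun t => E (Function.update l i t)) (l i) ≤ (fun t => E (Function.update l i t)) t := by
      simpa using hmini
    have hub : g l i ≤ 0 := by
      rcases eq_or_lt_of_le (hlmem.1 i) with h | h
      · -- l i = lamL i : compare with corner (lamL i, lamU elsewhere)
        set c : Fin q → ℝ := fun j => if j = i then lamL i else lamU j with hc
        have hcLam : c ∈ Lam := by
          rw [hLam]
          constructor
          · intro j; by_cases hj : j = i <;> simp [hc, hj, hle j]
          · intro j; by_cases hj : j = i <;> simp [hc, hj, hle i]
        have hlc : l ≤ c := by
          intro j
          by_cases hj : j = i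
          · subst hj; simp [hc, ← h]
          · simpa [hc, hj] using hlmem.2 j
        have := h2 l hlLam c hcLam hlc i
        exact le_trans this (h3 i).1
      · exact deriv_nonpos_of_isMinOn hmini' h (hlmem.2 i) (hgder i)
    have hlb : 0 ≤ g l i := by
      rcases eq_or_lt_of_le (hlmem.2 i) with h | h
      · -- l i = lamU i : compare with corner (lamU i, lamL elsewhere)
        set c : Fin q → ℝ := fun j => if j = i then lamU i else lamL j with hc
        have hcLam : c ∈ Lam := by
          rw [hLam]
          constructor
          · intro j; by_cases hj : j = i <;> simp [hc, hj, hle i]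
          · intro j; by_cases hj : j = i <;> simp [hc, hj, hle j]
        have hcl : c ≤ l := by
          intro j
          by_cases hj : j = i
          · subst hj; simp [hc, h]
          · simpa [hc, hj] using hlmem.1 j
        have := h2 c hcLam l hlLam hcl i
        exact le_trans (h3 i).2 this
      · exact deriv_nonneg_of_isMinOn hmini' (hlmem.1 i) h (hgder i)
    linarith
  -- arcsin (z l) lies in ker Cᵀ, hence in range Aᵀ
  have hkermem : (fun e => Real.arcsin (z l e)) ∈ LinearMap.ker (Cᵀ.mulVecLin) := by
    rw [LinearMap.mem_ker, Matrix.mulVecLin_apply]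
    funext i
    have := hgzero i
    rw [hg] at this
    exact this
  obtain ⟨θ, hθ⟩ := hker hkermem
  rw [Matrix.mulVecLin_apply] at hθ
  refine ⟨θ, ?_, ?_⟩
  · -- the power flow equation
    have hsin : (fun e => Real.sin (Aᵀ.mulVec θ e)) = z l := by
      funext e
      have : Aᵀ.mulVec θ e = Real.arcsin (z l e) := congrFun hθ e
      rw [this, Real.sin_arcsin]
      · linarith [abs_le.mp (h1 l hlLam e) |>.1]
      · exact (abs_le.mp (h1 l hlLam e)).2
    rw [hsin]
    have hDz : D.mulVec (z l) = fhat + C.mulVec l := by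
      rw [hz, Matrix.mulVec_add, hz0, Matrix.mulVec_mulVec, hDDinv, Matrix.one_mulVec,
        Matrix.mulVec_mulVec, hDH]
    rw [hDz, Matrix.mulVec_add, hfhat, Matrix.mulVec_mulVec, hAC, Matrix.zero_mulVec,
      add_zero]
  · -- the angle bound
    intro e
    have : Aᵀ.mulVec θ e = Real.arcsin (z l e) := congrFun hθ e
    rw [this, abs_le]
    exact ⟨Real.neg_pi_div_two_le_arcsin _, Real.arcsin_le_pi_div_two _⟩
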